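/- Let α be an m×m real matrix with singular values λ₁,…,λ_m, all lying in [0,1]. Then |det α| = ∏ᵢ λᵢ and hence arccos|det α| ≤ √(∑ᵢ arccos²(λᵢ)). -/

import Mathlib

open scoped RealInnerProductSpace
open Matrix Real Set

noncomputable def gfun : ℝ → ℝ := fun t => Real.cos (Real.sqrt t)
noncomputable def gfun' : ℝ → ℝ := fun t => -Real.sin (Real.sqrt t) / (2 * Real.sqrt t)

lemma my_arccos_anti {u v : ℝ} (h : u ≤ v) : Real.arccos v ≤ Real.arccos u := by
  unfold Real.arccos
  have := Real.monotone_arcsin h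
  linarith

lemma hasDerivAt_gfun {t : ℝ} (ht : 0 < t) : HasDerivAt gfun (gfun' t) t := by
  have h1 : HasDerivAt Real.sqrt (1 / (2 * Real.sqrt t)) t := Real.hasDerivAt_sqrt ht.ne'
  have h2 := (Real.hasDerivAt_cos (Real.sqrt t)).comp t h1
  refine h2.congr_deriv (Eq.symm ?_)
  simp only [gfun']; field_simp

lemma hasDerivAt_gfun' {t : ℝ} (ht : 0 < t) :
    HasDerivAt gfun' ((Real.sin (Real.sqrt t) - Real.sqrt t * Real.cos (Real.sqrt t)) /
      (4 * t * Real.sqrt t)) t := by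
  have hst : 0 < Real.sqrt t := Real.sqrt_pos.2 ht
  have h1 : HasDerivAt Real.sqrt (1 / (2 * Real.sqrt t)) t := Real.hasDerivAt_sqrt ht.ne'
  have hn : HasDerivAt (fun t => -Real.sin (Real.sqrt t))
      (-(Real.cos (Real.sqrt t) * (1 / (2 * Real.sqrt t)))) t :=
    (((Real.hasDerivAt_sin (Real.sqrt t)).comp t h1)).neg
  have hd : HasDerivAt (fun t => 2 * Real.sqrt t) (2 * (1 / (2 * Real.sqrt t))) t :=
    h1.const_mul 2
  have := hn.div hd (by positivity)
  refine this.congr_deriv (Eq.symm ?_)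
  have e : Real.sqrt t ^ 2 = t := Real.sq_sqrt ht.le
  field_simp
  ring_nf
  linear_combination (4 * Real.sin (Real.sqrt t)
    - 4 * Real.sqrt t * Real.cos (Real.sqrt t)) * e

lemma convexOn_gfun : ConvexOn ℝ (Set.Icc (0:ℝ) (π^2)) gfun := by
  have hD : Convex ℝ (Set.Icc (0:ℝ) (π^2)) := convex_Icc _ _
  have hint : interior (Set.Icc (0:ℝ) (π^2)) = Set.Ioo 0 (π^2) := interior_Icc
  refine convexOn_of_hasDerivWithinAt2_nonneg hD ?_ (f' := gfun')
    (f'' := fun t => (Real.sin (Real.sqrt t) - Real.sqrt t * Real.cos (Real.sqrt t)) /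
      (4 * t * Real.sqrt t)) ?_ ?_ ?_
  · exact (Real.continuous_cos.comp Real.continuous_sqrt).continuousOn
  · intro x hx
    rw [hint] at hx
    exact (hasDerivAt_gfun hx.1).hasDerivWithinAt
  · intro x hx
    rw [hint] at hx
    exact (hasDerivAt_gfun' hx.1).hasDerivWithinAt
  · intro x hx
    rw [hint] at hx
    have hx0 := hx.1
    have hst : 0 < Real.sqrt x := Real.sqrt_pos.2 hx0
    have hsle : Real.sqrt x ≤ π := by
      rw [show π = Real.sqrt (π^2) by rw [Real.sqrt_sq Real.pi_pos.le]]
      exact Real.sqrt_le_sqrt hx.2.le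
    set s := Real.sqrt x with hs
    have key : 0 ≤ Real.sin s - s * Real.cos s := by
      rcases le_or_gt (Real.cos s) 0 with h | h
      · have : 0 ≤ Real.sin s := Real.sin_nonneg_of_nonneg_of_le_pi hst.le hsle
        nlinarith
      · have hlt : s < π/2 := by
          by_contra hc
          push_neg at hc
          have := Real.cos_nonpos_of_pi_div_two_le_of_le hc (by linarith [Real.pi_pos])
          linarith
        have := Real.lt_tan hst hlt
        rw [Real.tan_eq_sin_div_cos, lt_div_iff₀ h] at this
        linarith
    positivity

lemma cos_mul_cos_ge {a b : ℝ} (ha : a ∈ Set.Icc 0 (π/2)) (hb : b ∈ Set.Icc 0 (π/2)) :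
    Real.cos (Real.sqrt (a^2 + b^2)) ≤ Real.cos a * Real.cos b := by
  obtain ⟨ha0, ha1⟩ := ha
  obtain ⟨hb0, hb1⟩ := hb
  have hpi := Real.pi_pos
  have hx : (a - b)^2 ∈ Set.Icc (0:ℝ) (π^2) := ⟨sq_nonneg _, by nlinarith⟩
  have hy : (a + b)^2 ∈ Set.Icc (0:ℝ) (π^2) := ⟨sq_nonneg _, by nlinarith⟩
  have h := convexOn_gfun.2 hx hy (by norm_num : (0:ℝ) ≤ 1/2) (by norm_num : (0:ℝ) ≤ 1/2)
    (by norm_num)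
  simp only [smul_eq_mul] at h
  have hmid : (1/2 : ℝ) * (a-b)^2 + (1/2 : ℝ) * (a+b)^2 = a^2 + b^2 := by ring
  rw [hmid] at h
  have hg1 : gfun ((a-b)^2) = Real.cos (a - b) := by
    simp only [gfun, Real.sqrt_sq_eq_abs]
    rcases abs_choice (a - b) with h' | h' <;> rw [h']
    rw [Real.cos_neg]
  have hg2 : gfun ((a+b)^2) = Real.cos (a + b) := by
    simp only [gfun, Real.sqrt_sq_eq_abs, abs_of_nonneg (by linarith : (0:ℝ) ≤ a + b)]
  rw [hg1, hg2] at h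
  calc Real.cos (Real.sqrt (a^2+b^2)) = gfun (a^2 + b^2) := rfl
    _ ≤ 1/2 * Real.cos (a-b) + 1/2 * Real.cos (a+b) := h
    _ = Real.cos a * Real.cos b := by rw [Real.cos_sub, Real.cos_add]; ring

lemma arccos_mul_le {x y : ℝ} (hx : x ∈ Set.Icc (0:ℝ) 1) (hy : y ∈ Set.Icc (0:ℝ) 1) :
    Real.arccos (x * y) ≤ Real.sqrt (Real.arccos x ^ 2 + Real.arccos y ^ 2) := by
  set a := Real.arccos x with ha
  set b := Real.arccos y with hb
  have hpi := Real.pi_pos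
  have haI : a ∈ Set.Icc 0 (π/2) := ⟨Real.arccos_nonneg x, Real.arccos_le_pi_div_two.2 hx.1⟩
  have hbI : b ∈ Set.Icc 0 (π/2) := ⟨Real.arccos_nonneg y, Real.arccos_le_pi_div_two.2 hy.1⟩
  have hxy : x * y = Real.cos a * Real.cos b := by
    rw [ha, hb, Real.cos_arccos (by linarith [hx.1]) hx.2, Real.cos_arccos (by linarith [hy.1]) hy.2]
  have h1 : Real.cos (Real.sqrt (a^2 + b^2)) ≤ x * y := hxy ▸ cos_mul_cos_ge haI hbI
  have h2 : Real.arccos (x * y) ≤ Real.arccos (Real.cos (Real.sqrt (a^2 + b^2))) :=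
    my_arccos_anti h1
  have h3 : Real.arccos (Real.cos (Real.sqrt (a^2 + b^2))) = Real.sqrt (a^2 + b^2) := by
    apply Real.arccos_cos (Real.sqrt_nonneg _)
    rw [show π = Real.sqrt (π^2) by rw [Real.sqrt_sq Real.pi_pos.le]]
    apply Real.sqrt_le_sqrt
    obtain ⟨ha0, ha1⟩ := haI; obtain ⟨hb0, hb1⟩ := hbI
    nlinarith
  linarith [h2, h3.le, h3.ge]

lemma arccos_prod_le {ι : Type*} (s : Finset ι) (f : ι → ℝ)
    (hf : ∀ i ∈ s, f i ∈ Set.Icc (0:ℝ) 1) :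
    Real.arccos (∏ i ∈ s, f i) ≤ Real.sqrt (∑ i ∈ s, Real.arccos (f i) ^ 2) := by
  induction s using Finset.cons_induction with
  | empty => simp [Real.arccos_one]
  | cons a s has ih =>
    have hmem : ∀ i ∈ s, f i ∈ Set.Icc (0:ℝ) 1 := fun i hi => hf i (Finset.mem_cons_of_mem hi)
    have hP : (∏ i ∈ s, f i) ∈ Set.Icc (0:ℝ) 1 := by
      constructor
      · exact Finset.prod_nonneg fun i hi => (hmem i hi).1
      · exact Finset.prod_le_one (fun i hi => (hmem i hi).1) (fun i hi => (hmem i hi).2)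
    have hfa := hf a (Finset.mem_cons_self a s)
    rw [Finset.prod_cons, Finset.sum_cons]
    calc Real.arccos (f a * ∏ i ∈ s, f i)
        ≤ Real.sqrt (Real.arccos (f a) ^ 2 + Real.arccos (∏ i ∈ s, f i) ^ 2) :=
          arccos_mul_le hfa hP
      _ ≤ Real.sqrt (Real.arccos (f a) ^ 2 + ∑ i ∈ s, Real.arccos (f i) ^ 2) := by
          apply Real.sqrt_le_sqrt
          have h4 : Real.arccos (∏ i ∈ s, f i) ^ 2 ≤ ∑ i ∈ s, Real.arccos (f i) ^ 2 := by
            have h5 : (0:ℝ) ≤ ∑ i ∈ s, Real.arccos (f i) ^ 2 :=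
              Finset.sum_nonneg fun i _ => sq_nonneg _
            have h6 := pow_le_pow_left₀ (Real.arccos_nonneg _) (ih hmem) 2
            rwa [Real.sq_sqrt h5] at h6
          linarith

theorem abs_det_eq_prod_singular_and_arccos_le
    {m : ℕ} (α : Matrix (Fin m) (Fin m) ℝ)
    (hA : (α * αᵀ).IsHermitian)
    (l : Fin m → ℝ) (hl : ∀ i, l i ∈ Set.Icc (0:ℝ) 1)
    (hsv : ∀ i, l i ^ 2 = hA.eigenvalues i) :
    |α.det| = ∏ i, l i ∧
      Real.arccos |α.det| ≤ Real.sqrt (∑ i, Real.arccos (l i) ^ 2) := by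
  have hdet : |α.det| = ∏ i, l i := by
    have h1 : (α * αᵀ).det = α.det ^ 2 := by
      rw [Matrix.det_mul, Matrix.det_transpose, sq]
    have h2 : (α * αᵀ).det = ∏ i, (l i ^ 2) := by
      rw [hA.det_eq_prod_eigenvalues]
      exact Finset.prod_congr rfl fun i _ => by rw [← hsv i]; norm_num
    have h3 : α.det ^ 2 = (∏ i, l i) ^ 2 := by
      rw [← h1, h2, ← Finset.prod_pow]
    have hprod : 0 ≤ ∏ i, l i := Finset.prod_nonneg fun i _ => (hl i).1
    rw [← Real.sqrt_sq (abs_nonneg α.det), sq_abs, h3, Real.sqrt_sq hprod]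
  refine ⟨hdet, ?_⟩
  rw [hdet]
  exact arccos_prod_le Finset.univ l fun i _ => hl i
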